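/- Under the regularity setting, there exists a sequence (ξ̂ₙ) of Ξ-valued estimators (each ξ̂ₙ a measurable function of (y₁,…,yₙ)) such that, almost surely, for all sufficiently large n, ξ̂ₙ is a global maximum over Ξ of the average log-likelihood ℓ̄ₙ(ξ) = (1/n)Σ_{i=1}^n log f(yᵢ|ξ). -/

import Mathlib

open MeasureTheory ProbabilityTheory Filter

noncomputable section

/-- The regularity setting (R3)–(R8) for a statistical model `{f(·|ξ) : ξ ∈ Ξ}`
on countable data, with respect to the data-generating pmf `q`. -/
structure RegularModel (Y : Type) (q : Y → ℝ) (d : ℕ) where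
  Xi : Set (EuclideanSpace ℝ (Fin d))
  Xi_open : IsOpen Xi
  Xi_nonempty : Xi.Nonempty
  f : Y → EuclideanSpace ℝ (Fin d) → ℝ
  f_pos : ∀ y, ∀ ξ ∈ Xi, 0 < f y ξ
  f_pmf : ∀ ξ ∈ Xi, ∑' y, f y ξ = 1
  xistar : EuclideanSpace ℝ (Fin d)
  xistar_mem : xistar ∈ Xi
  /-- (R3): the Kullback–Leibler divergence is finite (summable) at `xistar`. -/
  R3_summable : Summable (fun y => q y * Real.log (q y / f y xistar))
  /-- (R3): `xistar` is the unique minimizer of the Kullback–Leibler divergence over `Xi`. -/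
  R3_unique_min : ∀ ξ ∈ Xi, ξ ≠ xistar →
    ¬ Summable (fun y => q y * Real.log (q y / f y ξ)) ∨
      (∑' y, q y * Real.log (q y / f y xistar)) < ∑' y, q y * Real.log (q y / f y ξ)
  /-- (R4): finite second moment of the log-likelihood ratio at `xistar`. -/
  R4 : Summable (fun y => q y * (Real.log (q y / f y xistar)) ^ 2)
  /-- gradient of the unit log-likelihood -/
  s : Y → EuclideanSpace ℝ (Fin d) → EuclideanSpace ℝ (Fin d)
  /-- Hessian of the unit log-likelihood -/
  H : Y → EuclideanSpace ℝ (Fin d) → EuclideanSpace ℝ (Fin d) →L[ℝ] EuclideanSpace ℝ (Fin d)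
  /-- (R5): the unit log-likelihood has gradient `s` on `Xi`. -/
  R5_grad : ∀ y, ∀ ξ ∈ Xi, HasGradientAt (fun ξ' => Real.log (f y ξ')) (s y ξ) ξ
  /-- (R5): the gradient has derivative (Hessian) `H` on `Xi`. -/
  R5_hess : ∀ y, ∀ ξ ∈ Xi, HasFDerivAt (s y) (H y ξ) ξ
  /-- (R5): the Hessian is continuous on `Xi`. -/
  R5_cont : ∀ y, ContinuousOn (H y) Xi
  /-- (R6) -/
  R6_log : Summable (fun y => q y * |Real.log (f y xistar)|)
  /-- (R6) -/
  R6_score : Summable (fun y => q y * ‖s y xistar‖ ^ 2)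
  /-- radius of the ball `B` of (R7) -/
  r : ℝ
  r_pos : 0 < r
  ball_subset : Metric.ball xistar r ⊆ Xi
  c : Y → ℝ
  c_nonneg : ∀ y, 0 ≤ c y
  c_summable : Summable (fun y => q y * c y)
  /-- (R7): domination of the Hessian on the ball `B`. -/
  R7_bound : ∀ y, ∀ ξ ∈ Metric.ball xistar r, ‖H y ξ‖ ≤ c y
  /-- (R8): connected upper level sets of all average log-likelihoods. -/
  R8 : ∀ (n : ℕ) (ys : Fin n → Y) (lam : ℝ),
    IsPreconnected {ξ | ξ ∈ Xi ∧ lam < (1 / (n : ℝ)) * ∑ i, Real.log (f (ys i) ξ)}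

/-- The ball `B` of assumption (R7). -/
def RegularModel.B {Y : Type} {q : Y → ℝ} {d : ℕ} (M : RegularModel Y q d) :
    Set (EuclideanSpace ℝ (Fin d)) :=
  Metric.ball M.xistar M.r

/-- `yseq` are i.i.d. random variables on `(Ω, P)` with common pmf `q`. -/
def IIDData {Ω Y : Type} [MeasurableSpace Ω] [MeasurableSpace Y]
    (P : Measure Ω) (yseq : ℕ → Ω → Y) (q : Y → ℝ) : Prop :=
  (∀ i, Measurable (yseq i)) ∧
    iIndepFun yseq P ∧
      ∀ i y, (P {ω | yseq i ω = y}).toReal = q y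

/-- The average log-likelihood based on the data `ys`. -/
def avgLogLik {Y : Type} {d : ℕ} (f : Y → EuclideanSpace ℝ (Fin d) → ℝ)
    (n : ℕ) (ys : Fin n → Y) (ξ : EuclideanSpace ℝ (Fin d)) : ℝ :=
  (1 / (n : ℝ)) * ∑ i, Real.log (f (ys i) ξ)

/-- `est` is a sequence of maximum-likelihood estimators: `est n` is a measurable,
`Ξ`-valued function of the first `n` observations which, almost surely, for all
sufficiently large `n`, globally maximizes the average log-likelihood over `Ξ`. -/
def IsMLESeq {Ω Y : Type} [MeasurableSpace Ω] [MeasurableSpace Y] {q : Y → ℝ} {d : ℕ}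
    (M : RegularModel Y q d) (P : Measure Ω) (yseq : ℕ → Ω → Y)
    (est : (n : ℕ) → (Fin n → Y) → EuclideanSpace ℝ (Fin d)) : Prop :=
  (∀ n, Measurable (est n)) ∧ (∀ n ys, est n ys ∈ M.Xi) ∧
    ∀ᵐ ω ∂P, ∃ N : ℕ, ∀ n ≥ N, ∀ ξ ∈ M.Xi,
      avgLogLik M.f n (fun i => yseq i ω) ξ ≤
        avgLogLik M.f n (fun i => yseq i ω) (est n (fun i => yseq i ω))

/-- A sequence of real random variables is bounded in probability. -/
def BoundedInProb {Ω : Type} [MeasurableSpace Ω] (P : Measure Ω) (R : ℕ → Ω → ℝ) : Prop :=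
  ∀ ε > (0 : ℝ), ∃ M > (0 : ℝ), ∃ N : ℕ, ∀ n ≥ N, (P {ω | M < |R n ω|}).toReal < ε

end

open scoped Topology

lemma integrable_of_summable_countable {Y : Type} [Countable Y] [MeasurableSpace Y]
    [MeasurableSingletonClass Y] {μ : Measure Y} [IsFiniteMeasure μ] (g : Y → ℝ)
    (h : Summable (fun y => (μ {y}).toReal * |g y|)) : Integrable g μ := by
  refine ⟨(measurable_of_countable g).aestronglyMeasurable, ?_⟩
  rw [HasFiniteIntegral, lintegral_countable']
  have : ∀ y : Y, ‖g y‖ₑ * μ {y} = ENNReal.ofReal ((μ {y}).toReal * |g y|) := by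
    intro y
    rw [ENNReal.ofReal_mul ENNReal.toReal_nonneg, ENNReal.ofReal_toReal (measure_ne_top μ _),
      ← Real.norm_eq_abs, ofReal_norm, mul_comm]
  rw [tsum_congr this, ← ENNReal.ofReal_tsum_of_nonneg
    (fun y => mul_nonneg ENNReal.toReal_nonneg (abs_nonneg _)) h]
  exact ENNReal.ofReal_lt_top

lemma slln_comp {Y Ω : Type} [Countable Y] [MeasurableSpace Y] [MeasurableSingletonClass Y]
    [MeasurableSpace Ω] {q : Y → ℝ}
    (P : Measure Ω) [IsProbabilityMeasure P] (yseq : ℕ → Ω → Y)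
    (hiid : IIDData P yseq q) (g : Y → ℝ)
    (hg : Summable (fun y => q y * |g y|)) :
    ∀ᵐ ω ∂P, Tendsto (fun n : ℕ => (1 / (n : ℝ)) * ∑ i : Fin n, g (yseq i ω))
      atTop (𝓝 (∑' y, q y * g y)) := by
  obtain ⟨hmeas, hindep, hdist⟩ := hiid
  set μ := P.map (yseq 0) with hμ
  have hmapsing : ∀ i y, (P.map (yseq i)) {y} = ENNReal.ofReal (q y) := by
    intro i y
    rw [Measure.map_apply (hmeas i) (measurableSet_singleton y)]
    have h1 : (P (yseq i ⁻¹' {y})).toReal = q y := by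
      have := hdist i y
      simpa [Set.preimage, Set.mem_singleton_iff] using this
    rw [← h1, ENNReal.ofReal_toReal (measure_ne_top P _)]
  have hmapeq : ∀ i, P.map (yseq i) = μ := by
    intro i
    refine MeasureTheory.Measure.ext_of_singleton fun y => ?_
    rw [hmapsing i y, hμ, hmapsing 0 y]
  haveI : IsProbabilityMeasure μ := Measure.isProbabilityMeasure_map (hmeas 0).aemeasurable
  have hμsing : ∀ y, (μ {y}).toReal = q y := by
    intro y; rw [hμ, hmapsing 0 y, ENNReal.toReal_ofReal]
    have := hdist 0 y; rw [← this]; exact ENNReal.toReal_nonneg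
  have hint : Integrable g μ := by
    apply integrable_of_summable_countable
    simpa only [hμsing] using hg
  have hXint : Integrable (fun ω => g (yseq 0 ω)) P := by
    exact (integrable_map_measure (measurable_of_countable g).aestronglyMeasurable
      (hmeas 0).aemeasurable).1 hint
  have hEX : ∫ ω, g (yseq 0 ω) ∂P = ∑' y, q y * g y := by
    rw [← integral_map (hmeas 0).aemeasurable (measurable_of_countable g).aestronglyMeasurable,
      ← hμ, integral_countable' hint]
    exact tsum_congr fun y => by rw [Measure.real, hμsing y, smul_eq_mul]
  have hident : ∀ i, IdentDistrib (fun ω => g (yseq i ω)) (fun ω => g (yseq 0 ω)) P P := by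
    intro i
    refine ⟨((measurable_of_countable g).comp (hmeas i)).aemeasurable,
      ((measurable_of_countable g).comp (hmeas 0)).aemeasurable, ?_⟩
    show Measure.map (g ∘ yseq i) P = Measure.map (g ∘ yseq 0) P
    rw [← Measure.map_map (measurable_of_countable g) (hmeas i),
      ← Measure.map_map (measurable_of_countable g) (hmeas 0), hmapeq i, hmapeq 0]
  have := strong_law_ae (μ := P) (fun i ω => g (yseq i ω)) hXint
    (fun i j hij => (hindep.indepFun hij).comp (measurable_of_countable g)
      (measurable_of_countable g))
    hident
  rw [hEX] at this
  filter_upwards [this] with ω hω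
  convert hω using 2 with n
  rw [Fin.sum_univ_eq_sum_range (fun i => g (yseq i ω)) n, smul_eq_mul, one_div]
section Determ
open Metric

variable {Y : Type} {q : Y → ℝ} {d : ℕ}

namespace RegularModel

/-- bound for the score on the ball -/
lemma score_bound (M : RegularModel Y q d) (y : Y) {ξ : EuclideanSpace ℝ (Fin d)}
    (hξ : ξ ∈ Metric.ball M.xistar M.r) :
    ‖M.s y ξ‖ ≤ ‖M.s y M.xistar‖ + M.c y * M.r := by
  have h1 : ‖M.s y ξ - M.s y M.xistar‖ ≤ M.c y * ‖ξ - M.xistar‖ :=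
    (convex_ball M.xistar M.r).norm_image_sub_le_of_norm_hasFDerivWithin_le
      (fun x hx => (M.R5_hess y x (M.ball_subset hx)).hasFDerivWithinAt)
      (fun x hx => M.R7_bound y x hx) (Metric.mem_ball_self M.r_pos) hξ
  have h2 : ‖ξ - M.xistar‖ ≤ M.r := by
    rw [← dist_eq_norm]; exact (Metric.mem_ball.1 hξ).le
  calc ‖M.s y ξ‖ ≤ ‖M.s y M.xistar‖ + ‖M.s y ξ - M.s y M.xistar‖ := by
        have := norm_add_le (M.s y M.xistar) (M.s y ξ - M.s y M.xistar)
        simpa using this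
    _ ≤ ‖M.s y M.xistar‖ + M.c y * M.r := by
        refine add_le_add_right (h1.trans ?_) _
        exact mul_le_mul_of_nonneg_left h2 (M.c_nonneg y)

/-- Lipschitz bound for the unit log-likelihood on the ball -/
lemma loglik_lip (M : RegularModel Y q d) (y : Y) {ξ ξ' : EuclideanSpace ℝ (Fin d)}
    (hξ : ξ ∈ Metric.ball M.xistar M.r) (hξ' : ξ' ∈ Metric.ball M.xistar M.r) :
    |Real.log (M.f y ξ) - Real.log (M.f y ξ')| ≤
      (‖M.s y M.xistar‖ + M.c y * M.r) * ‖ξ - ξ'‖ := by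
  have h1 : ∀ x ∈ Metric.ball M.xistar M.r,
      HasFDerivWithinAt (fun ζ => Real.log (M.f y ζ))
        ((InnerProductSpace.toDual ℝ (EuclideanSpace ℝ (Fin d))) (M.s y x))
        (Metric.ball M.xistar M.r) x := fun x hx =>
    ((M.R5_grad y x (M.ball_subset hx)).hasFDerivAt).hasFDerivWithinAt
  have h2 : ∀ x ∈ Metric.ball M.xistar M.r,
      ‖(InnerProductSpace.toDual ℝ (EuclideanSpace ℝ (Fin d))) (M.s y x)‖ ≤
        ‖M.s y M.xistar‖ + M.c y * M.r := by
    intro x hx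
    rw [LinearIsometryEquiv.norm_map]
    exact M.score_bound y hx
  have := (convex_ball M.xistar M.r).norm_image_sub_le_of_norm_hasFDerivWithin_le h1 h2 hξ' hξ
  simpa [Real.norm_eq_abs] using this

end RegularModel

end Determ
section Determ2
open Metric

variable {Y : Type} {q : Y → ℝ} {d : ℕ}

namespace RegularModel

/-- the limiting expected log-likelihood -/
noncomputable def L (M : RegularModel Y q d) (ξ : EuclideanSpace ℝ (Fin d)) : ℝ :=
  ∑' y, q y * Real.log (M.f y ξ)

/-- the Lipschitz dominating function -/
noncomputable def Db (M : RegularModel Y q d) (y : Y) : ℝ := ‖M.s y M.xistar‖ + M.c y * M.r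

lemma Db_nonneg (M : RegularModel Y q d) (y : Y) : 0 ≤ M.Db y :=
  add_nonneg (norm_nonneg _) (mul_nonneg (M.c_nonneg y) M.r_pos.le)

lemma summable_q (hq_pos : ∀ y, 0 < q y) (hq_pmf : ∑' y, q y = 1) : Summable q := by
  by_contra h
  rw [tsum_eq_zero_of_not_summable h] at hq_pmf
  norm_num at hq_pmf

lemma summable_qs (M : RegularModel Y q d) (hq_pos : ∀ y, 0 < q y) (hq_pmf : ∑' y, q y = 1) :
    Summable (fun y => q y * ‖M.s y M.xistar‖) := by
  refine Summable.of_nonneg_of_le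
    (fun y => mul_nonneg (hq_pos y).le (norm_nonneg _))
    (fun y => ?_) (((summable_q hq_pos hq_pmf).add M.R6_score))
  have h1 : ‖M.s y M.xistar‖ ≤ 1 + ‖M.s y M.xistar‖ ^ 2 := by nlinarith [norm_nonneg (M.s y M.xistar)]
  calc q y * ‖M.s y M.xistar‖ ≤ q y * (1 + ‖M.s y M.xistar‖ ^ 2) :=
        mul_le_mul_of_nonneg_left h1 (hq_pos y).le
    _ = q y + q y * ‖M.s y M.xistar‖ ^ 2 := by ring

lemma summable_qD (M : RegularModel Y q d) (hq_pos : ∀ y, 0 < q y) (hq_pmf : ∑' y, q y = 1) :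
    Summable (fun y => q y * M.Db y) := by
  have := (M.summable_qs hq_pos hq_pmf).add (M.c_summable.mul_right M.r)
  refine this.congr fun y => ?_
  simp only [Db]; ring

lemma qD_nonneg (M : RegularModel Y q d) (hq_pos : ∀ y, 0 < q y) (y : Y) :
    0 ≤ q y * M.Db y := mul_nonneg (hq_pos y).le (M.Db_nonneg y)

lemma log_diff_bound (M : RegularModel Y q d) (y : Y) {ξ ξ' : EuclideanSpace ℝ (Fin d)}
    (hξ : ξ ∈ Metric.ball M.xistar M.r) (hξ' : ξ' ∈ Metric.ball M.xistar M.r) :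
    |Real.log (M.f y ξ) - Real.log (M.f y ξ')| ≤ M.Db y * ‖ξ - ξ'‖ :=
  M.loglik_lip y hξ hξ'

lemma log_abs_bound (M : RegularModel Y q d) (y : Y) {ξ : EuclideanSpace ℝ (Fin d)}
    (hξ : ξ ∈ Metric.ball M.xistar M.r) :
    |Real.log (M.f y ξ)| ≤ |Real.log (M.f y M.xistar)| + M.Db y * M.r := by
  have h1 := M.log_diff_bound y hξ (Metric.mem_ball_self M.r_pos)
  have h2 : ‖ξ - M.xistar‖ ≤ M.r := by
    rw [← dist_eq_norm]; exact (Metric.mem_ball.1 hξ).le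
  have h3 : M.Db y * ‖ξ - M.xistar‖ ≤ M.Db y * M.r :=
    mul_le_mul_of_nonneg_left h2 (M.Db_nonneg y)
  calc |Real.log (M.f y ξ)|
      ≤ |Real.log (M.f y M.xistar)| + |Real.log (M.f y ξ) - Real.log (M.f y M.xistar)| := by
        have := abs_add_le (Real.log (M.f y M.xistar))
          (Real.log (M.f y ξ) - Real.log (M.f y M.xistar))
        simpa using this
    _ ≤ _ := add_le_add_right (h1.trans h3) _

lemma summable_qlog_abs (M : RegularModel Y q d) (hq_pos : ∀ y, 0 < q y)
    (hq_pmf : ∑' y, q y = 1) {ξ : EuclideanSpace ℝ (Fin d)}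
    (hξ : ξ ∈ Metric.ball M.xistar M.r) :
    Summable (fun y => q y * |Real.log (M.f y ξ)|) := by
  refine Summable.of_nonneg_of_le (fun y => mul_nonneg (hq_pos y).le (abs_nonneg _))
    (fun y => ?_) (M.R6_log.add ((M.summable_qD hq_pos hq_pmf).mul_right M.r))
  calc q y * |Real.log (M.f y ξ)| ≤ q y * (|Real.log (M.f y M.xistar)| + M.Db y * M.r) :=
        mul_le_mul_of_nonneg_left (M.log_abs_bound y hξ) (hq_pos y).le
    _ = q y * |Real.log (M.f y M.xistar)| + q y * M.Db y * M.r := by ring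

lemma summable_qlog (M : RegularModel Y q d) (hq_pos : ∀ y, 0 < q y)
    (hq_pmf : ∑' y, q y = 1) {ξ : EuclideanSpace ℝ (Fin d)}
    (hξ : ξ ∈ Metric.ball M.xistar M.r) :
    Summable (fun y => q y * Real.log (M.f y ξ)) := by
  refine Summable.of_abs ((M.summable_qlog_abs hq_pos hq_pmf hξ).congr fun y => ?_)
  rw [abs_mul, abs_of_nonneg (hq_pos y).le]

lemma L_lt (M : RegularModel Y q d) (hq_pos : ∀ y, 0 < q y) (hq_pmf : ∑' y, q y = 1)
    {ξ : EuclideanSpace ℝ (Fin d)} (hξ : ξ ∈ Metric.ball M.xistar M.r)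
    (hne : ξ ≠ M.xistar) : M.L ξ < M.L M.xistar := by
  have hb0 : M.xistar ∈ Metric.ball M.xistar M.r := Metric.mem_ball_self M.r_pos
  have hsf : Summable fun y => q y * Real.log (M.f y ξ) := M.summable_qlog hq_pos hq_pmf hξ
  have hsf0 : Summable fun y => q y * Real.log (M.f y M.xistar) :=
    M.summable_qlog hq_pos hq_pmf hb0
  have hg : Summable (fun y => q y * (Real.log (M.f y M.xistar) - Real.log (M.f y ξ))) := by
    refine (hsf0.sub hsf).congr fun y => ?_; ring
  have key : (fun y => q y * Real.log (q y / M.f y ξ)) =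
      fun y => q y * Real.log (q y / M.f y M.xistar) +
        q y * (Real.log (M.f y M.xistar) - Real.log (M.f y ξ)) := by
    funext y
    rw [Real.log_div (ne_of_gt (hq_pos y)) (ne_of_gt (M.f_pos y ξ (M.ball_subset hξ))),
      Real.log_div (ne_of_gt (hq_pos y)) (ne_of_gt (M.f_pos y M.xistar M.xistar_mem))]
    ring
  have hsum : Summable (fun y => q y * Real.log (q y / M.f y ξ)) := by
    rw [key]; exact M.R3_summable.add hg
  rcases M.R3_unique_min ξ (M.ball_subset hξ) hne with h | h
  · exact absurd hsum h
  · have ht : ∑' y, q y * Real.log (q y / M.f y ξ) =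
        (∑' y, q y * Real.log (q y / M.f y M.xistar)) +
          ∑' y, q y * (Real.log (M.f y M.xistar) - Real.log (M.f y ξ)) := by
      rw [key]; exact Summable.tsum_add M.R3_summable hg
    rw [ht] at h
    have h2 : 0 < ∑' y, q y * (Real.log (M.f y M.xistar) - Real.log (M.f y ξ)) := by linarith
    have h3 : ∑' y, q y * (Real.log (M.f y M.xistar) - Real.log (M.f y ξ)) =
        M.L M.xistar - M.L ξ := by
      rw [L, L, ← Summable.tsum_sub hsf0 hsf]
      exact tsum_congr fun y => by ring
    rw [h3] at h2; linarith

set_option maxHeartbeats 1000000 in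
lemma L_lip (M : RegularModel Y q d) (hq_pos : ∀ y, 0 < q y) (hq_pmf : ∑' y, q y = 1)
    {ξ ξ' : EuclideanSpace ℝ (Fin d)} (hξ : ξ ∈ Metric.ball M.xistar M.r)
    (hξ' : ξ' ∈ Metric.ball M.xistar M.r) :
    |M.L ξ - M.L ξ'| ≤ (∑' y, q y * M.Db y) * ‖ξ - ξ'‖ := by
  have hsf : Summable fun y => q y * Real.log (M.f y ξ) := M.summable_qlog hq_pos hq_pmf hξ
  have hsf' : Summable fun y => q y * Real.log (M.f y ξ') := M.summable_qlog hq_pos hq_pmf hξ'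
  have h1 : M.L ξ - M.L ξ' = ∑' y, q y * (Real.log (M.f y ξ) - Real.log (M.f y ξ')) := by
    rw [L, L, ← Summable.tsum_sub hsf hsf']
    exact tsum_congr fun y => by ring
  rw [h1]
  have habs : Summable (fun y => |q y * (Real.log (M.f y ξ) - Real.log (M.f y ξ'))|) := by
    refine Summable.of_nonneg_of_le (fun y => abs_nonneg _) (fun y => ?_)
      (((M.summable_qD hq_pos hq_pmf)).mul_right ‖ξ - ξ'‖)
    rw [abs_mul, abs_of_nonneg (hq_pos y).le]
    calc q y * |Real.log (M.f y ξ) - Real.log (M.f y ξ')| ≤ q y * (M.Db y * ‖ξ - ξ'‖) :=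
          mul_le_mul_of_nonneg_left (M.log_diff_bound y hξ hξ') (hq_pos y).le
      _ = q y * M.Db y * ‖ξ - ξ'‖ := by ring
  have habs' : Summable (fun y => ‖q y * (Real.log (M.f y ξ) - Real.log (M.f y ξ'))‖) := by
    simpa only [Real.norm_eq_abs] using habs
  have hstep := norm_tsum_le_tsum_norm habs'
  rw [Real.norm_eq_abs] at hstep
  calc |∑' y, q y * (Real.log (M.f y ξ) - Real.log (M.f y ξ'))|
      ≤ ∑' y, |q y * (Real.log (M.f y ξ) - Real.log (M.f y ξ'))| :=
        hstep.trans_eq (tsum_congr fun y => Real.norm_eq_abs _)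
    _ ≤ ∑' y, q y * M.Db y * ‖ξ - ξ'‖ := by
        refine Summable.tsum_le_tsum (fun y => ?_) habs
          (((M.summable_qD hq_pos hq_pmf)).mul_right ‖ξ - ξ'‖)
        rw [abs_mul, abs_of_nonneg (hq_pos y).le]
        calc q y * |Real.log (M.f y ξ) - Real.log (M.f y ξ')| ≤ q y * (M.Db y * ‖ξ - ξ'‖) :=
              mul_le_mul_of_nonneg_left (M.log_diff_bound y hξ hξ') (hq_pos y).le
          _ = q y * M.Db y * ‖ξ - ξ'‖ := by ring
    _ = (∑' y, q y * M.Db y) * ‖ξ - ξ'‖ := tsum_mul_right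

lemma avg_lip (M : RegularModel Y q d) (n : ℕ) (ys : Fin n → Y)
    {ξ ξ' : EuclideanSpace ℝ (Fin d)} (hξ : ξ ∈ Metric.ball M.xistar M.r)
    (hξ' : ξ' ∈ Metric.ball M.xistar M.r) :
    |avgLogLik M.f n ys ξ - avgLogLik M.f n ys ξ'| ≤
      ((1 / (n : ℝ)) * ∑ i, M.Db (ys i)) * ‖ξ - ξ'‖ := by
  unfold avgLogLik
  rw [← mul_sub, ← Finset.sum_sub_distrib, abs_mul,
    abs_of_nonneg (by positivity : (0:ℝ) ≤ 1 / (n : ℝ)), mul_assoc]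
  refine mul_le_mul_of_nonneg_left ?_ (by positivity)
  calc |∑ i, (Real.log (M.f (ys i) ξ) - Real.log (M.f (ys i) ξ'))|
      ≤ ∑ i, |Real.log (M.f (ys i) ξ) - Real.log (M.f (ys i) ξ')| :=
        Finset.abs_sum_le_sum_abs _ _
    _ ≤ ∑ i, M.Db (ys i) * ‖ξ - ξ'‖ :=
        Finset.sum_le_sum fun i _ => M.log_diff_bound (ys i) hξ hξ'
    _ = (∑ i, M.Db (ys i)) * ‖ξ - ξ'‖ := by rw [Finset.sum_mul]

lemma avg_contOn (M : RegularModel Y q d) (n : ℕ) (ys : Fin n → Y) :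
    ContinuousOn (avgLogLik M.f n ys) M.Xi := by
  unfold avgLogLik
  refine continuousOn_const.mul (continuousOn_finset_sum _ fun i _ => fun ξ hξ => ?_)
  exact ((M.R5_grad (ys i) ξ hξ).differentiableAt.continuousAt).continuousWithinAt

end RegularModel

end Determ2

/-- under the regularity setting, there exists a sequence of measurable
`Ξ`-valued estimators which, almost surely, for all sufficiently large `n`, globally
maximize the average log-likelihood over `Ξ`. -/
theorem exists_mle_sequence
    {Y Ω : Type} [Countable Y] [MeasurableSpace Y] [MeasurableSingletonClass Y]
    [MeasurableSpace Ω] {d : ℕ} {q : Y → ℝ}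
    (P : MeasureTheory.Measure Ω) [MeasureTheory.IsProbabilityMeasure P]
    (yseq : ℕ → Ω → Y)
    (hq_pos : ∀ y, 0 < q y) (hq_pmf : ∑' y, q y = 1)
    (hiid : IIDData P yseq q)
    (M : RegularModel Y q d) :
    ∃ est : (n : ℕ) → (Fin n → Y) → EuclideanSpace ℝ (Fin d),
      (∀ n, Measurable (est n)) ∧ (∀ n ys, est n ys ∈ M.Xi) ∧
        ∀ᵐ ω ∂P, ∃ N : ℕ, ∀ n ≥ N, ∀ ξ ∈ M.Xi,
          avgLogLik M.f n (fun i => yseq i ω) ξ ≤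
            avgLogLik M.f n (fun i => yseq i ω) (est n (fun i => yseq i ω)) := by
  classical
  rcases Nat.eq_zero_or_pos d with hd | hd
  · subst hd
    refine ⟨fun n ys => M.xistar, fun n => measurable_of_countable _,
      fun n ys => M.xistar_mem, ?_⟩
    refine Eventually.of_forall fun ω => ⟨0, fun n _ ξ hξ => ?_⟩
    have : ξ = M.xistar := Subsingleton.elim _ _
    rw [this]
  haveI : Nonempty (Fin d) := ⟨⟨0, hd⟩⟩
  set r2 := M.r / 2 with hr2
  have hr2pos : 0 < r2 := by have := M.r_pos; positivity
  have hr2lt : r2 < M.r := by have := M.r_pos; rw [hr2]; linarith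
  set K := Metric.closedBall M.xistar r2 with hK
  have hKball : K ⊆ Metric.ball M.xistar M.r := Metric.closedBall_subset_ball hr2lt
  have hKXi : K ⊆ M.Xi := hKball.trans M.ball_subset
  have hmax : ∀ (n : ℕ) (ys : Fin n → Y), ∃ ξ, ξ ∈ K ∧ IsMaxOn (avgLogLik M.f n ys) K ξ := by
    intro n ys
    obtain ⟨ξ, hξK, hm⟩ := (isCompact_closedBall M.xistar r2).exists_isMaxOn
      ⟨M.xistar, Metric.mem_closedBall_self hr2pos.le⟩ ((M.avg_contOn n ys).mono hKXi)
    exact ⟨ξ, hξK, hm⟩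
  set est : (n : ℕ) → (Fin n → Y) → EuclideanSpace ℝ (Fin d) :=
    fun n ys => (hmax n ys).choose with hest
  have est_mem : ∀ n ys, est n ys ∈ K := fun n ys => (hmax n ys).choose_spec.1
  have est_max : ∀ n ys, IsMaxOn (avgLogLik M.f n ys) K (est n ys) :=
    fun n ys => (hmax n ys).choose_spec.2
  refine ⟨est, fun n => measurable_of_countable _, fun n ys => hKXi (est_mem n ys), ?_⟩
  -- constants
  set C0 := ∑' y, q y * M.Db y with hC0
  have hC0nonneg : 0 ≤ C0 := tsum_nonneg (M.qD_nonneg hq_pos)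
  set S := Metric.sphere M.xistar r2 with hSdef
  have hSne : S.Nonempty := NormedSpace.sphere_nonempty.2 hr2pos.le
  have hSball : S ⊆ Metric.ball M.xistar M.r := fun x hx => by
    rw [Metric.mem_ball]
    rw [hSdef, Metric.mem_sphere] at hx
    rw [hx]; exact hr2lt
  -- L continuous on S, with max ξ₀
  have hLcont : ContinuousOn M.L S := by
    rw [Metric.continuousOn_iff]
    intro b hb ε hε
    refine ⟨ε / (C0 + 1), by positivity, fun a ha hab => ?_⟩
    have h1 : |M.L a - M.L b| ≤ C0 * ‖a - b‖ :=
      M.L_lip hq_pos hq_pmf (hSball ha) (hSball hb)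
    have h2 : ‖a - b‖ < ε / (C0 + 1) := by rwa [← dist_eq_norm]
    rw [Real.dist_eq]
    calc |M.L a - M.L b| ≤ C0 * ‖a - b‖ := h1
      _ ≤ C0 * (ε / (C0 + 1)) := by
          exact mul_le_mul_of_nonneg_left h2.le hC0nonneg
      _ < ε := by
          rw [div_eq_inv_mul, ← mul_assoc]
          have hlt : C0 * (C0 + 1)⁻¹ < 1 := by
            rw [mul_inv_lt_iff₀ (by linarith)]; linarith
          nlinarith
  obtain ⟨ξ₀, hξ₀S, hξ₀max⟩ := (isCompact_sphere M.xistar r2).exists_isMaxOn hSne hLcont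
  have hξ₀ball : ξ₀ ∈ Metric.ball M.xistar M.r := hSball hξ₀S
  have hξ₀ne : ξ₀ ≠ M.xistar := by
    intro h
    rw [Metric.mem_sphere, h, dist_self] at hξ₀S
    exact absurd hξ₀S.symm (ne_of_gt hr2pos)
  have hLlt := M.L_lt hq_pos hq_pmf hξ₀ball hξ₀ne
  set g0 := M.L M.xistar - M.L ξ₀ with hg0
  have hg0pos : 0 < g0 := by rw [hg0]; linarith
  set ε := g0 / (4 * (C0 + 1)) with hεdef
  have hεpos : 0 < ε := by positivity
  -- finite net on the sphere
  have hcover : S ⊆ ⋃ x ∈ S, Metric.ball x ε := fun x hx =>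
    Set.mem_biUnion hx (Metric.mem_ball_self hεpos)
  obtain ⟨t, htS, htfin, hcov⟩ := (isCompact_sphere M.xistar r2).elim_finite_subcover_image
    (fun x _ => Metric.isOpen_ball) hcover
  -- almost sure events
  have hA1 := slln_comp P yseq hiid (fun y => Real.log (M.f y M.xistar))
    (M.summable_qlog_abs hq_pos hq_pmf (Metric.mem_ball_self M.r_pos))
  have hA3 := slln_comp P yseq hiid M.Db (by
    refine (M.summable_qD hq_pos hq_pmf).congr fun y => ?_
    rw [abs_of_nonneg (M.Db_nonneg y)])
  have hA2 : ∀ᵐ ω ∂P, ∀ x ∈ t, Tendsto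
      (fun n : ℕ => (1 / (n : ℝ)) * ∑ i : Fin n, Real.log (M.f (yseq i ω) x))
      atTop (𝓝 (M.L x)) := by
    refine (ae_ball_iff htfin.countable).2 fun x hx => ?_
    exact slln_comp P yseq hiid (fun y => Real.log (M.f y x))
      (M.summable_qlog_abs hq_pos hq_pmf (hSball (htS hx)))
  filter_upwards [hA1, hA2, hA3] with ω h1 h2 h3
  -- eventual bounds
  have h1' : Tendsto (fun n : ℕ => (1 / (n : ℝ)) * ∑ i : Fin n, Real.log (M.f (yseq i ω) M.xistar))
      atTop (𝓝 (M.L M.xistar)) := h1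
  have hev1 : ∀ᶠ n : ℕ in atTop,
      M.L M.xistar - g0 / 4 < (1 / (n : ℝ)) * ∑ i : Fin n, Real.log (M.f (yseq i ω) M.xistar) :=
    (tendsto_order.1 h1').1 _ (by linarith)
  have hev2 : ∀ᶠ n : ℕ in atTop, ∀ x ∈ t,
      (1 / (n : ℝ)) * ∑ i : Fin n, Real.log (M.f (yseq i ω) x) < M.L ξ₀ + g0 / 4 := by
    rw [eventually_all_finite htfin]
    intro x hx
    refine (tendsto_order.1 (h2 x hx)).2 _ ?_
    have hle : M.L x ≤ M.L ξ₀ := hξ₀max (htS hx)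
    linarith
  have hev3 : ∀ᶠ n : ℕ in atTop,
      (1 / (n : ℝ)) * ∑ i : Fin n, M.Db (yseq i ω) < C0 + 1 :=
    (tendsto_order.1 h3).2 _ (by linarith)
  obtain ⟨N, hN⟩ := eventually_atTop.1 ((hev1.and hev2).and hev3)
  refine ⟨N, fun n hn ξ hξ => ?_⟩
  obtain ⟨⟨b1, b2⟩, b3⟩ := hN n hn
  set ys : Fin n → Y := fun i => yseq i ω with hys
  set ℓ : EuclideanSpace ℝ (Fin d) → ℝ := avgLogLik M.f n ys with hℓ
  have hLn_nonneg : 0 ≤ (1 / (n : ℝ)) * ∑ i : Fin n, M.Db (ys i) := by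
    apply mul_nonneg (by positivity)
    exact Finset.sum_nonneg fun i _ => M.Db_nonneg (ys i)
  -- bound on the sphere
  have hSbound : ∀ ζ ∈ S, ℓ ζ ≤ M.L M.xistar - g0 / 2 := by
    intro ζ hζ
    obtain ⟨x, hxt, hζx⟩ := Set.mem_iUnion₂.1 (hcov hζ)
    have hxball : x ∈ Metric.ball M.xistar M.r := hSball (htS hxt)
    have hζball : ζ ∈ Metric.ball M.xistar M.r := hSball hζ
    have hlip := M.avg_lip n ys hζball hxball
    have hnorm : ‖ζ - x‖ ≤ ε := by
      rw [← dist_eq_norm]; exact (Metric.mem_ball.1 hζx).le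
    have hLnlt : (1 / (n : ℝ)) * ∑ i : Fin n, M.Db (ys i) ≤ C0 + 1 := b3.le
    have key : |ℓ ζ - ℓ x| ≤ (C0 + 1) * ε := by
      refine hlip.trans ?_
      exact mul_le_mul hLnlt hnorm (norm_nonneg _) (by linarith)
    have hεeq : (C0 + 1) * ε = g0 / 4 := by
      rw [hεdef]; field_simp
    have hx2 : ℓ x < M.L ξ₀ + g0 / 4 := b2 x hxt
    have habs := abs_le.1 key
    have : ℓ ζ ≤ ℓ x + (C0 + 1) * ε := by linarith [habs.2]
    rw [hεeq] at this
    have : ℓ ζ ≤ M.L ξ₀ + g0 / 2 := by linarith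
    rw [hg0] at this ⊢
    linarith
  have hstar : M.L M.xistar - g0 / 4 < ℓ M.xistar := b1
  set lam := M.L M.xistar - g0 / 2 with hlam
  have hlam_lt : lam < ℓ M.xistar := by rw [hlam]; linarith
  -- the estimator
  set ξh := est n ys with hξh
  have hξhK : ξh ∈ K := est_mem n ys
  have hξhmax : IsMaxOn ℓ K ξh := est_max n ys
  have hm : ℓ M.xistar ≤ ℓ ξh := hξhmax (Metric.mem_closedBall_self hr2pos.le)
  have hlam_m : lam < ℓ ξh := lt_of_lt_of_le hlam_lt hm
  -- suppose for contradiction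
  by_contra hcon
  push_neg at hcon
  have hcon' : ℓ ξh < ℓ ξ := hcon
  have hξnotK : ξ ∉ K := fun hmem => absurd (hξhmax hmem) (not_le.2 hcon')
  -- connectedness argument
  have hU := M.R8 n ys lam
  set U : Set (EuclideanSpace ℝ (Fin d)) :=
    {ζ | ζ ∈ M.Xi ∧ lam < (1 / (n : ℝ)) * ∑ i, Real.log (M.f (ys i) ζ)} with hUdef
  have hUℓ : ∀ ζ, ζ ∈ U ↔ ζ ∈ M.Xi ∧ lam < ℓ ζ := fun ζ => Iff.rfl
  have hsub : U ⊆ Metric.ball M.xistar r2 ∪ (Metric.closedBall M.xistar r2)ᶜ := by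
    intro ζ hζ
    rcases (hUℓ ζ).1 hζ with ⟨hζXi, hζlam⟩
    by_cases hc : ζ ∈ Metric.closedBall M.xistar r2
    · left
      rw [Metric.mem_closedBall] at hc
      rcases lt_or_eq_of_le hc with hlt | heq
      · exact Metric.mem_ball.2 hlt
      · exfalso
        have hζS : ζ ∈ S := Metric.mem_sphere.2 heq
        exact absurd (hSbound ζ hζS) (not_le.2 hζlam)
    · right; exact hc
  have hmemu : (U ∩ Metric.ball M.xistar r2).Nonempty := by
    refine ⟨ξh, (hUℓ ξh).2 ⟨hKXi hξhK, hlam_m⟩, ?_⟩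
    rcases lt_or_eq_of_le (Metric.mem_closedBall.1 hξhK) with hlt | heq
    · exact Metric.mem_ball.2 hlt
    · exfalso
      have : ξh ∈ S := Metric.mem_sphere.2 heq
      exact absurd (hSbound ξh this) (not_le.2 hlam_m)
  have hmemv : (U ∩ (Metric.closedBall M.xistar r2)ᶜ).Nonempty :=
    ⟨ξ, (hUℓ ξ).2 ⟨hξ, lt_trans hlam_m hcon'⟩, hξnotK⟩
  obtain ⟨z, _, hzu, hzv⟩ := hU (Metric.ball M.xistar r2) (Metric.closedBall M.xistar r2)ᶜ
    Metric.isOpen_ball (Metric.isClosed_closedBall.isOpen_compl) hsub hmemu hmemv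
  exact hzv (Metric.ball_subset_closedBall hzu)
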